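/- Let ρ ∈ (0,1), α ≥ 1, N ≥ 1, and let φ = (√((α-1)² + 4αN) + α - 1)/2. If nonnegative reals satisfy ρC⁽¹⁾ + (1-ρ)L⁽¹⁾ ≤ (1-ρ)(φ+1)L* and ρC⁽²⁾ + (1-ρ)L⁽²⁾ ≤ αρ(N/φ + 1)C*, with ρC* + (1-ρ)L* > 0, then the ratio (ρ(C⁽¹⁾+C⁽²⁾) + (1-ρ)(L⁽¹⁾+L⁽²⁾))/(ρC* + (1-ρ)L*) ≤ φ + 1 = (√((α-1)² + 4αN) + α + 1)/2. -/
import Mathlib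


theorem full_intercomm_ratio (ρ α N Cs Ls C1 L1 C2 L2 φ : ℝ)
    (hρ0 : 0 < ρ) (hρ1 : ρ < 1) (hα : 1 ≤ α) (hN : 1 ≤ N)
    (hCs : 0 ≤ Cs) (hLs : 0 ≤ Ls) (hC1 : 0 ≤ C1) (hL1 : 0 ≤ L1)
    (hC2 : 0 ≤ C2) (hL2 : 0 ≤ L2)
    (hpos : 0 < ρ * Cs + (1 - ρ) * Ls)
    (hφ : φ = (Real.sqrt ((α - 1)^2 + 4*α*N) + α - 1) / 2)
    (h1 : ρ * C1 + (1 - ρ) * L1 ≤ (1 - ρ) * (φ + 1) * Ls)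
    (h2 : ρ * C2 + (1 - ρ) * L2 ≤ α * ρ * (N / φ + 1) * Cs) :
    (ρ * (C1 + C2) + (1 - ρ) * (L1 + L2)) / (ρ * Cs + (1 - ρ) * Ls) ≤ φ + 1 ∧
      φ + 1 = (Real.sqrt ((α - 1)^2 + 4*α*N) + α + 1) / 2 := by
  set s := Real.sqrt ((α - 1)^2 + 4*α*N) with hs
  have hsq : s^2 = (α - 1)^2 + 4*α*N := by
    rw [hs]; exact Real.sq_sqrt (by nlinarith)
  have hs2 : 2 ≤ s := by nlinarith [Real.sqrt_nonneg ((α - 1)^2 + 4*α*N)]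
  have hφpos : 0 < φ := by rw [hφ]; linarith
  have hφeq : φ^2 = (α - 1) * φ + α * N := by rw [hφ]; nlinarith
  have hkey : α * (N / φ + 1) = φ + 1 := by
    field_simp
    nlinarith
  have h2' : ρ * C2 + (1 - ρ) * L2 ≤ (φ + 1) * ρ * Cs := by
    have h3 : α * (N / φ + 1) * (ρ * Cs) = (φ + 1) * (ρ * Cs) := by rw [hkey]
    nlinarith [h3]
  constructor
  · rw [div_le_iff₀ hpos]
    nlinarith
  · rw [hφ]; ring
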